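/- Assume |N(μ)| < K and m > 1, μ ∈ F_m. For every feasible local search strategy η of the Graves-Lai program (i.e., η_j = 0 for j ∉ N(μ)), and for every mode k ∈ M(μ) \ {k*(μ)}, we have η_k ≥ 1/d_k(μ_k, μ_k − δ_k), where δ_k = min_{ℓ: (k,ℓ)∈E} |μ_k − μ_ℓ|. Consequently C_loc(m,μ) ≥ Σ_{k ∈ M(μ)\{k*(μ)}} Δ_k/d_k(μ_k, μ_k − δ_k). -/

import Mathlib

def IsMode {K : ℕ} (G : SimpleGraph (Fin K)) (lam : Fin K → ℝ) (k : Fin K) : Prop :=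
  ∀ l, G.Adj k l → lam l < lam k

def AtMostModal {K : ℕ} (G : SimpleGraph (Fin K)) (m : ℕ) : Set (Fin K → ℝ) :=
  {lam | {k | IsMode G lam k}.ncard ≤ m}

def ModeNeighborhood {K : ℕ} (G : SimpleGraph (Fin K)) (mu : Fin K → ℝ) : Set (Fin K) :=
  {j | IsMode G mu j ∨ ∃ i, IsMode G mu i ∧ G.Adj i j}

def ConfusingSet {K : ℕ} (G : SimpleGraph (Fin K)) (m : ℕ) (mu : Fin K → ℝ)
    (kstar : Fin K) : Set (Fin K → ℝ) :=
  {lam | lam ∈ AtMostModal G m ∧ lam kstar = mu kstar ∧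
    ∃ j, j ≠ kstar ∧ ∀ i, i ≠ j → lam i < lam j}


section Aux
variable {K m : ℕ} {G : SimpleGraph (Fin K)} {mu : Fin K → ℝ} {kstar : Fin K}

lemma aux_main (hm : 1 < m)
    (hkstar : ∀ j, j ≠ kstar → mu j < mu kstar)
    (hmodes : {j | IsMode G mu j}.ncard = m)
    (j0 : Fin K) (hj0 : j0 ∉ ModeNeighborhood G mu)
    (δ : Fin K → ℝ)
    (hδmin : ∀ k, IsMode G mu k → ∃ l, G.Adj k l ∧ δ k = |mu k - mu l|)
    (hδle : ∀ k, IsMode G mu k → ∀ l, G.Adj k l → δ k ≤ |mu k - mu l|)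
    (d : Fin K → ℝ → ℝ → ℝ)
    (hd0 : ∀ j x y, 0 ≤ d j x y)
    (hdzero : ∀ j (x : ℝ), d j x x = 0)
    (η : Fin K → ℝ) (hpos : ∀ j, 0 ≤ η j)
    (hfeas : ∀ lam ∈ ConfusingSet G m mu kstar, 1 ≤ ∑ j, η j * d j (mu j) (lam j))
    (hloc : ∀ j, j ∉ ModeNeighborhood G mu → η j = 0)
    (k : Fin K) (hk : IsMode G mu k) (hkne : k ≠ kstar) :
    1 / d k (mu k) (mu k - δ k) ≤ η k := by
  classical
  obtain ⟨l, hadj, hδ⟩ := hδmin k hk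
  have hlk : mu l < mu k := hk l hadj
  have hδval : δ k = mu k - mu l := by rw [hδ, abs_of_pos]; linarith
  have hδpos : 0 < δ k := by rw [hδval]; linarith
  have hmuile : ∀ i, mu i ≤ mu kstar := by
    intro i
    rcases eq_or_ne i kstar with rfl | h
    · exact le_rfl
    · exact (hkstar i h).le
  set lam : Fin K → ℝ :=
    fun i => if i = j0 then mu kstar + 1 else if i = k then mu k - δ k else mu i with hlam
  have hkj0 : k ≠ j0 := by rintro rfl; exact hj0 (Or.inl hk)
  have hksmode : IsMode G mu kstar := by
    intro l hl
    exact hkstar l (by rintro rfl; exact G.loopless.irrefl _ hl)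
  have hksj0 : kstar ≠ j0 := by rintro rfl; exact hj0 (Or.inl hksmode)
  have hlamks : lam kstar = mu kstar := by
    simp only [hlam, if_neg hksj0, if_neg (Ne.symm hkne)]
  have hlamj0 : lam j0 = mu kstar + 1 := by simp [hlam]
  have hlamk : lam k = mu k - δ k := by simp [hlam, hkj0]
  have hlamle : ∀ i, i ≠ j0 → lam i < lam j0 := by
    intro i hi
    rw [hlamj0]
    rcases eq_or_ne i k with h | h
    · rw [h, hlamk]; have := hmuile k; linarith
    · simp only [hlam, if_neg hi, if_neg h]
      have := hmuile i; linarith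
  have hlamcs : lam ∈ ConfusingSet G m mu kstar := by
    refine ⟨?_, hlamks, j0, Ne.symm hksj0, hlamle⟩
    have hsub : {i | IsMode G lam i} ⊆ insert j0 ({i | IsMode G mu i} \ {k}) := by
      intro i hi
      rcases eq_or_ne i j0 with rfl | hij0
      · exact Set.mem_insert _ _
      have hik : i ≠ k := by
        rintro rfl
        have h2 := hi l hadj
        have hlN : l ∈ ModeNeighborhood G mu := Or.inr ⟨i, hk, hadj⟩
        have hlj0 : l ≠ j0 := by rintro rfl; exact hj0 hlN
        have hlk2 : l ≠ i := fun h => G.loopless.irrefl i (h ▸ hadj)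
        rw [hlamk] at h2
        simp only [hlam, if_neg hlj0, if_neg hlk2] at h2
        rw [hδval] at h2; linarith
      have hlami : lam i = mu i := by simp only [hlam, if_neg hij0, if_neg hik]
      refine Set.mem_insert_of_mem _ ⟨?_, hik⟩
      intro l2 hl2
      have h2 := hi l2 hl2
      rw [hlami] at h2
      rcases eq_or_ne l2 j0 with rfl | hl2j0
      · rw [hlamj0] at h2; have := hmuile i; linarith
      rcases eq_or_ne l2 k with rfl | hl2k
      · rw [hlamk] at h2
        have hik2 : mu i < mu l2 := hk i (hl2.symm)
        have := hδle l2 hk i hl2.symm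
        rw [abs_of_pos (by linarith)] at this
        linarith
      · simpa only [hlam, if_neg hl2j0, if_neg hl2k] using h2
    have hfin : ({i | IsMode G mu i} : Set (Fin K)).Finite := Set.toFinite _
    have hkmem : k ∈ {i | IsMode G mu i} := hk
    calc {i | IsMode G lam i}.ncard
        ≤ (insert j0 ({i | IsMode G mu i} \ {k})).ncard :=
          Set.ncard_le_ncard hsub (Set.toFinite _)
      _ ≤ ({i | IsMode G mu i} \ {k}).ncard + 1 := Set.ncard_insert_le _ _
      _ = (m - 1) + 1 := by
          rw [Set.ncard_diff_singleton_of_mem hkmem, hmodes]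
      _ ≤ m := by omega
  have h1 := hfeas lam hlamcs
  have hsum : ∑ j, η j * d j (mu j) (lam j) = η k * d k (mu k) (mu k - δ k) := by
    rw [Finset.sum_eq_single k]
    · rw [hlamk]
    · intro b _ hb
      rcases eq_or_ne b j0 with rfl | hbj0
      · rw [hloc b hj0]; ring
      · simp only [hlam, if_neg hbj0, if_neg hb, hdzero, mul_zero]
    · intro h; exact absurd (Finset.mem_univ k) h
  rw [hsum] at h1
  have hdpos : 0 < d k (mu k) (mu k - δ k) := by
    rcases (hd0 k (mu k) (mu k - δ k)).lt_or_eq with h | h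
    · exact h
    · rw [← h] at h1; nlinarith [hpos k]
  rw [div_le_iff₀ hdpos]
  linarith

end Aux
open Classical in
/-- Suboptimality of local search: any feasible local search strategy must satisfy
`η_k ≥ 1/d_k(μ_k, μ_k - δ_k)` at each suboptimal mode `k`, hence
`C_loc(m,μ) ≥ Σ_{k ∈ M(μ)\{k*}} Δ_k / d_k(μ_k, μ_k - δ_k)`. -/
theorem local_search_lower_bound {K m : ℕ} (hm : 1 < m) (G : SimpleGraph (Fin K))
    (hG : G.IsTree)
    (mu : Fin K → ℝ) (kstar : Fin K)
    (hmodes : {j | IsMode G mu j}.ncard = m)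
    (hkstar : ∀ j, j ≠ kstar → mu j < mu kstar)
    (hN : (ModeNeighborhood G mu).ncard < K)
    (Δ : Fin K → ℝ) (hΔ : ∀ k, Δ k = mu kstar - mu k)
    (δ : Fin K → ℝ)
    (hδmin : ∀ k, IsMode G mu k → ∃ l, G.Adj k l ∧ δ k = |mu k - mu l|)
    (hδle : ∀ k, IsMode G mu k → ∀ l, G.Adj k l → δ k ≤ |mu k - mu l|)
    (d : Fin K → ℝ → ℝ → ℝ)
    (hd0 : ∀ j x y, 0 ≤ d j x y)
    (hdcont : ∀ j (x : ℝ), Continuous (d j x))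
    (hdzero : ∀ j (x : ℝ), d j x x = 0)
    (hdanti : ∀ j (x : ℝ), StrictAntiOn (d j x) (Set.Iic x))
    (hdmono : ∀ j (x : ℝ), StrictMonoOn (d j x) (Set.Ici x)) :
    (∀ η : Fin K → ℝ, (∀ j, 0 ≤ η j) →
      (∀ lam ∈ ConfusingSet G m mu kstar, 1 ≤ ∑ j, η j * d j (mu j) (lam j)) →
      (∀ j, j ∉ ModeNeighborhood G mu → η j = 0) →
      ∀ k, IsMode G mu k → k ≠ kstar →
        1 / d k (mu k) (mu k - δ k) ≤ η k) ∧
    (∑ k ∈ Finset.univ.filter (fun k => IsMode G mu k ∧ k ≠ kstar),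
        Δ k / d k (mu k) (mu k - δ k)) ≤
      sInf {x : ℝ | ∃ η : Fin K → ℝ, (∀ j, 0 ≤ η j) ∧
        (∀ lam ∈ ConfusingSet G m mu kstar, 1 ≤ ∑ j, η j * d j (mu j) (lam j)) ∧
        (∀ j, j ∉ ModeNeighborhood G mu → η j = 0) ∧
        x = ∑ j, η j * Δ j} := by

  classical
  have hK : 0 < K := lt_of_le_of_lt (Nat.zero_le _) hN
  haveI : Nonempty (Fin K) := ⟨⟨0, hK⟩⟩
  obtain ⟨j0, hj0⟩ : ∃ j0, j0 ∉ ModeNeighborhood G mu := by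
    by_contra h
    push_neg at h
    have : ModeNeighborhood G mu = Set.univ := Set.eq_univ_of_forall h
    rw [this, Set.ncard_univ, Nat.card_eq_fintype_card, Fintype.card_fin] at hN
    omega
  refine ⟨fun η hpos hfeas hloc =>
    aux_main hm hkstar hmodes j0 hj0 δ hδmin hδle d hd0 hdzero η hpos hfeas hloc, ?_⟩
  have hΔ0 : ∀ j, 0 ≤ Δ j := by
    intro j; rw [hΔ]
    rcases eq_or_ne j kstar with rfl | h
    · simp
    · linarith [hkstar j h]
  set Nf : Finset (Fin K) := Finset.univ.filter (fun j => j ∈ ModeNeighborhood G mu) with hNf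
  set P : Finset (Fin K × Fin K) :=
    Finset.univ.filter (fun p => IsMode G mu p.1 ∧ G.Adj p.1 p.2) with hP
  set A : Finset ℝ := insert 1 ((P.image (fun p => (mu p.1 - mu p.2)/2)) ∪
    ((Nf.erase kstar).image (fun j => mu kstar - mu j))) with hA
  have hAne : A.Nonempty := ⟨1, Finset.mem_insert_self _ _⟩
  set ρ := A.min' hAne with hρ
  have hρpos : 0 < ρ := by
    rw [hρ]
    apply (Finset.lt_min'_iff _ _).mpr
    intro b hb
    rw [hA] at hb
    rcases Finset.mem_insert.mp hb with rfl | hb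
    · norm_num
    rcases Finset.mem_union.mp hb with hb | hb
    · obtain ⟨p, hp, rfl⟩ := Finset.mem_image.mp hb
      have h1 := (Finset.mem_filter.mp hp).2
      have h2 := h1.1 p.2 h1.2
      linarith
    · obtain ⟨j, hj, rfl⟩ := Finset.mem_image.mp hb
      have hjne := Finset.ne_of_mem_erase hj
      linarith [hkstar j hjne]
  have hρ1 : ∀ a b : Fin K, IsMode G mu a → G.Adj a b → ρ ≤ (mu a - mu b)/2 := by
    intro a b ha hab
    apply Finset.min'_le
    rw [hA]; apply Finset.mem_insert_of_mem; apply Finset.mem_union_left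
    exact Finset.mem_image.mpr ⟨(a, b), Finset.mem_filter.mpr ⟨Finset.mem_univ _, ha, hab⟩, rfl⟩
  have hρ2 : ∀ j, j ∈ ModeNeighborhood G mu → j ≠ kstar → ρ ≤ mu kstar - mu j := by
    intro j hjm hjne
    apply Finset.min'_le
    rw [hA]; apply Finset.mem_insert_of_mem; apply Finset.mem_union_right
    exact Finset.mem_image.mpr ⟨j, Finset.mem_erase.mpr
      ⟨hjne, Finset.mem_filter.mpr ⟨Finset.mem_univ _, hjm⟩⟩, rfl⟩
  set cf : Fin K → ℝ := fun j => min (d j (mu j) (mu j - ρ)) (d j (mu j) (mu j + ρ)) with hcf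
  set c := (Finset.univ.image cf).min' (Finset.Nonempty.image Finset.univ_nonempty _) with hc
  have hcle : ∀ j, c ≤ cf j := fun j =>
    Finset.min'_le _ _ (Finset.mem_image_of_mem cf (Finset.mem_univ j))
  have hcfpos : ∀ j, 0 < cf j := by
    intro j
    rw [hcf]
    apply lt_min
    · have h1 : mu j - ρ ∈ Set.Iic (mu j) := by simp only [Set.mem_Iic]; linarith
      have h2 : mu j ∈ Set.Iic (mu j) := Set.mem_Iic.mpr le_rfl
      have := hdanti j (mu j) h1 h2 (by linarith)
      rw [hdzero] at this; exact this
    · have h1 : mu j ∈ Set.Ici (mu j) := Set.mem_Ici.mpr le_rfl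
      have h2 : mu j + ρ ∈ Set.Ici (mu j) := Set.mem_Ici.mpr (by linarith)
      have := hdmono j (mu j) h1 h2 (by linarith)
      rw [hdzero] at this; exact this
  have hcpos : 0 < c := by
    rw [hc]
    obtain ⟨j, hj, hval⟩ := Finset.mem_image.mp (Finset.min'_mem (Finset.univ.image cf) _)
    rw [← hval]; exact hcfpos j
  set η0 : Fin K → ℝ := fun j => if j ∈ ModeNeighborhood G mu then 1/c else 0 with hη0
  have hη0pos : ∀ j, 0 ≤ η0 j := by
    intro j; rw [hη0]; dsimp only; split
    · positivity
    · exact le_rfl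
  have hη0loc : ∀ j, j ∉ ModeNeighborhood G mu → η0 j = 0 := by
    intro j hj; simp [hη0, hj]
  have hη0feas : ∀ lam ∈ ConfusingSet G m mu kstar, 1 ≤ ∑ j, η0 j * d j (mu j) (lam j) := by
    intro lam hlam
    obtain ⟨hmodal, hlamks, jmax, hjne, hjmax⟩ := hlam
    have key : ∃ j1 ∈ ModeNeighborhood G mu, ρ ≤ |lam j1 - mu j1| := by
      by_contra hcon
      push_neg at hcon
      have hmsub : {i | IsMode G mu i} ⊆ {i | IsMode G lam i} := by
        intro a ha b hb
        have haN : a ∈ ModeNeighborhood G mu := Or.inl ha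
        have hbN : b ∈ ModeNeighborhood G mu := Or.inr ⟨a, ha, hb⟩
        have h1 := abs_lt.mp (hcon a haN)
        have h2 := abs_lt.mp (hcon b hbN)
        have h3 := hρ1 a b ha hb
        have h4 : mu b < mu a := ha b hb
        linarith
      have hjmaxgt : mu kstar < lam jmax := hlamks ▸ hjmax kstar (Ne.symm hjne)
      have hjmaxN : jmax ∉ ModeNeighborhood G mu := by
        intro hmem
        have h1 := abs_lt.mp (hcon jmax hmem)
        have h2 := hρ2 jmax hmem hjne
        linarith
      have hjmaxmode : IsMode G lam jmax := fun b hb =>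
        hjmax b (by rintro rfl; exact G.loopless.irrefl _ hb)
      have hjmaxnot : jmax ∉ {i | IsMode G mu i} := fun h => hjmaxN (Or.inl h)
      have hcontra : m + 1 ≤ m := by
        calc m + 1 = (insert jmax {i | IsMode G mu i}).ncard := by
              rw [Set.ncard_insert_of_notMem hjmaxnot, hmodes]
          _ ≤ {i | IsMode G lam i}.ncard := by
              apply Set.ncard_le_ncard _ (Set.toFinite _)
              intro x hx
              rcases Set.mem_insert_iff.mp hx with rfl | hx
              · exact hjmaxmode
              · exact hmsub hx
          _ ≤ m := hmodal
      omega
    obtain ⟨j1, hj1N, hj1⟩ := key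
    have hdge : c ≤ d j1 (mu j1) (lam j1) := by
      rcases le_abs.mp hj1 with h | h
      · calc c ≤ cf j1 := hcle j1
          _ ≤ d j1 (mu j1) (mu j1 + ρ) := min_le_right _ _
          _ ≤ d j1 (mu j1) (lam j1) :=
              (hdmono j1 (mu j1)).monotoneOn (Set.mem_Ici.mpr (by linarith))
                (Set.mem_Ici.mpr (by linarith)) (by linarith)
      · calc c ≤ cf j1 := hcle j1
          _ ≤ d j1 (mu j1) (mu j1 - ρ) := min_le_left _ _
          _ ≤ d j1 (mu j1) (lam j1) :=
              (hdanti j1 (mu j1)).antitoneOn (Set.mem_Iic.mpr (by linarith))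
                (Set.mem_Iic.mpr (by linarith)) (by linarith)
    calc (1 : ℝ) = (1/c) * c := by field_simp
      _ ≤ η0 j1 * d j1 (mu j1) (lam j1) := by
          rw [hη0]; dsimp only; rw [if_pos hj1N]
          exact mul_le_mul_of_nonneg_left hdge (by positivity)
      _ ≤ ∑ j, η0 j * d j (mu j) (lam j) :=
          Finset.single_le_sum (fun j _ => mul_nonneg (hη0pos j) (hd0 j _ _))
            (Finset.mem_univ j1)
  have hmem : (∑ j, η0 j * Δ j) ∈ {x : ℝ | ∃ η : Fin K → ℝ, (∀ j, 0 ≤ η j) ∧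
      (∀ lam ∈ ConfusingSet G m mu kstar, 1 ≤ ∑ j, η j * d j (mu j) (lam j)) ∧
      (∀ j, j ∉ ModeNeighborhood G mu → η j = 0) ∧
      x = ∑ j, η j * Δ j} := ⟨η0, hη0pos, hη0feas, hη0loc, rfl⟩
  apply le_csInf ⟨_, hmem⟩
  rintro x ⟨η, hpos, hfeas, hloc, rfl⟩
  calc ∑ k ∈ Finset.univ.filter (fun k => IsMode G mu k ∧ k ≠ kstar),
        Δ k / d k (mu k) (mu k - δ k)
      ≤ ∑ k ∈ Finset.univ.filter (fun k => IsMode G mu k ∧ k ≠ kstar), η k * Δ k := by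
        apply Finset.sum_le_sum
        intro k hk
        obtain ⟨hk1, hk2⟩ := (Finset.mem_filter.mp hk).2
        have hmain := aux_main hm hkstar hmodes j0 hj0 δ hδmin hδle d hd0 hdzero
          η hpos hfeas hloc k hk1 hk2
        calc Δ k / d k (mu k) (mu k - δ k)
            = (1 / d k (mu k) (mu k - δ k)) * Δ k := by ring
          _ ≤ η k * Δ k := mul_le_mul_of_nonneg_right hmain (hΔ0 k)
    _ ≤ ∑ j, η j * Δ j :=
        Finset.sum_le_sum_of_subset_of_nonneg (Finset.filter_subset _ _)
          (fun j _ _ => mul_nonneg (hpos j) (hΔ0 j))
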